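/- Let f be a Model-1 RND polynomial with f₂₀ < 1 and suppose f₁₁² + 4f₀₂(1−f₂₀) ≥ 0; let Y₋ ≤ Y₊ denote the two real roots of (1−f₂₀)z² + f₁₁z − f₀₂. For β₁ > β₂ define θ₁ := (h_f(β₁,1) − h_f(β₁,0))/(β₂−β₁) and θ₂ := (h_f(β₂,1) − h_f(β₂,0))/(β₁−β₂). Then θ₁ ≥ 0 and θ₂ ≤ 0 if and only if Y₋ ≤ β₂ and β₁ ≤ Y₊. (Hence the set of e-compatible pairs is exactly {(β₁,β₂) f-compatible : Y₋ ≤ β₂ < β₁ ≤ Y₊}.) -/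
import Mathlib


/-- Auxiliary function `h_f` of a Model-1 RND polynomial, affine in `I`. -/
def hfModel1 (f₀₀ f₀₂ f₁₀ f₁₁ f₂₀ : ℝ) (z I : ℝ) : ℝ :=
  (f₀₀ + f₁₀ * z + f₂₀ * z ^ 2) + I * (-f₀₂ + f₁₁ * z + (1 - f₂₀) * z ^ 2)

/-- in Model-1 with `f₂₀ < 1`, one has `θ₁ ≥ 0 ∧ θ₂ ≤ 0` iff
`Y₋ ≤ β₂` and `β₁ ≤ Y₊`; hence the e-compatible pairs are exactly the
f-compatible pairs with `Y₋ ≤ β₂ < β₁ ≤ Y₊`. -/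
theorem stmt_16 (f₀₀ f₀₁ f₀₂ f₁₀ f₁₁ f₂₀ Ym Yp : ℝ)
    (h20 : f₂₀ < 1)
    (hdisc : 0 ≤ f₁₁ ^ 2 + 4 * f₀₂ * (1 - f₂₀))
    (hY : Ym ≤ Yp)
    (hroots : ∀ z : ℝ,
      (1 - f₂₀) * z ^ 2 + f₁₁ * z - f₀₂ = (1 - f₂₀) * ((z - Yp) * (z - Ym))) :
    ∀ β₁ β₂ : ℝ, β₁ > β₂ →
      ((0 ≤ (hfModel1 f₀₀ f₀₂ f₁₀ f₁₁ f₂₀ β₁ 1 -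
            hfModel1 f₀₀ f₀₂ f₁₀ f₁₁ f₂₀ β₁ 0) / (β₂ - β₁) ∧
        (hfModel1 f₀₀ f₀₂ f₁₀ f₁₁ f₂₀ β₂ 1 -
            hfModel1 f₀₀ f₀₂ f₁₀ f₁₁ f₂₀ β₂ 0) / (β₁ - β₂) ≤ 0) ↔
        (Ym ≤ β₂ ∧ β₁ ≤ Yp)) ∧
      (((β₂ ≤ f₀₀ + f₀₁ + f₀₂ ∧ f₀₀ + f₀₁ + f₀₂ ≤ β₁ ∧
          (∀ I ∈ Set.Icc (0:ℝ) 1,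
            hfModel1 f₀₀ f₀₂ f₁₀ f₁₁ f₂₀ β₁ I ≤ 0 ∧
            0 ≤ hfModel1 f₀₀ f₀₂ f₁₀ f₁₁ f₂₀ β₂ I)) ∧
        0 ≤ (hfModel1 f₀₀ f₀₂ f₁₀ f₁₁ f₂₀ β₁ 1 -
            hfModel1 f₀₀ f₀₂ f₁₀ f₁₁ f₂₀ β₁ 0) / (β₂ - β₁) ∧
        (hfModel1 f₀₀ f₀₂ f₁₀ f₁₁ f₂₀ β₂ 1 -
            hfModel1 f₀₀ f₀₂ f₁₀ f₁₁ f₂₀ β₂ 0) / (β₁ - β₂) ≤ 0) ↔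
        ((β₂ ≤ f₀₀ + f₀₁ + f₀₂ ∧ f₀₀ + f₀₁ + f₀₂ ≤ β₁ ∧
          (∀ I ∈ Set.Icc (0:ℝ) 1,
            hfModel1 f₀₀ f₀₂ f₁₀ f₁₁ f₂₀ β₁ I ≤ 0 ∧
            0 ≤ hfModel1 f₀₀ f₀₂ f₁₀ f₁₁ f₂₀ β₂ I)) ∧
          Ym ≤ β₂ ∧ β₁ ≤ Yp)) := by

  intro β₁ β₂ hβ
  have h1 : (0:ℝ) < 1 - f₂₀ := by linarith
  have key : ∀ x : ℝ, (x - Yp) * (x - Ym) ≤ 0 ↔ Ym ≤ x ∧ x ≤ Yp := by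
    intro x
    constructor
    · intro h
      rcases mul_nonpos_iff.mp h with ⟨h1, h2⟩ | ⟨h1, h2⟩
      · constructor <;> nlinarith
      · constructor <;> linarith
    · intro ⟨h1, h2⟩
      apply mul_nonpos_of_nonpos_of_nonneg <;> linarith
  have diff : ∀ x : ℝ, hfModel1 f₀₀ f₀₂ f₁₀ f₁₁ f₂₀ x 1 -
      hfModel1 f₀₀ f₀₂ f₁₀ f₁₁ f₂₀ x 0 = (1 - f₂₀) * ((x - Yp) * (x - Ym)) := by
    intro x
    have := hroots x
    simp only [hfModel1]
    linarith
  have main : (0 ≤ (hfModel1 f₀₀ f₀₂ f₁₀ f₁₁ f₂₀ β₁ 1 -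
            hfModel1 f₀₀ f₀₂ f₁₀ f₁₁ f₂₀ β₁ 0) / (β₂ - β₁) ∧
        (hfModel1 f₀₀ f₀₂ f₁₀ f₁₁ f₂₀ β₂ 1 -
            hfModel1 f₀₀ f₀₂ f₁₀ f₁₁ f₂₀ β₂ 0) / (β₁ - β₂) ≤ 0) ↔
        (Ym ≤ β₂ ∧ β₁ ≤ Yp) := by
    rw [diff β₁, diff β₂]
    have hd1 : β₂ - β₁ < 0 := by linarith
    have hd2 : (0:ℝ) < β₁ - β₂ := by linarith
    rw [div_nonneg_iff, div_nonpos_iff]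
    constructor
    · rintro ⟨h₁, h₂⟩
      have e1 : (β₁ - Yp) * (β₁ - Ym) ≤ 0 := by
        rcases h₁ with ⟨ha, hb⟩ | ⟨ha, hb⟩
        · linarith
        · nlinarith
      have e2 : (β₂ - Yp) * (β₂ - Ym) ≤ 0 := by
        rcases h₂ with ⟨ha, hb⟩ | ⟨ha, hb⟩
        · linarith
        · nlinarith
      exact ⟨((key β₂).mp e2).1, ((key β₁).mp e1).2⟩
    · rintro ⟨h₁, h₂⟩
      have e1 : (β₁ - Yp) * (β₁ - Ym) ≤ 0 := (key β₁).mpr ⟨by linarith, h₂⟩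
      have e2 : (β₂ - Yp) * (β₂ - Ym) ≤ 0 := (key β₂).mpr ⟨h₁, by linarith⟩
      exact ⟨Or.inr ⟨by nlinarith, le_of_lt hd1⟩, Or.inr ⟨by nlinarith, hd2.le⟩⟩
  exact ⟨main, by rw [and_congr_right_iff]; intro _; exact main⟩
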